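/- Let M(𝒜,ℬ) be a principal group of directed automorphisms of a spherically homogeneous rooted tree T_m̄ with bounded valencies, and let S ⊆ M(𝒜,ℬ) be a finite set. Then there exist n_0 ∈ ℕ and a finite set of words {w_1, …, w_k}, each of length n_0, such that for every n > n_0, setting 𝔸_n = {0⋯0w_j : 1 ≤ j ≤ k} (the level-n words obtained from the w_j by prepending zeros) and 𝔹_n = {x0⋯0w_j : x ∈ X_{m_n}∖{0}, 1 ≤ j ≤ k} (level-n words with non-zero leading letter x followed by zeros and then w_j), the following holds for every s ∈ S and every level-n vertex w: if w ∈ 𝔸_n then s|_w ∈ 𝒜_n; if w ∈ 𝔹_n then s|_w ∈ ℬ_n; and otherwise s|_w is the identity. In particular 𝔸_n and 𝔹_n are disjoint. -/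

import Mathlib

open scoped ENNReal
namespace Paper
abbrev Vertex (m : ℕ → ℕ) (n : ℕ) := (i : Fin n) → Fin (m i)
variable {m : ℕ → ℕ}
def restr {n : ℕ} (w : Vertex m (n + 1)) : Vertex m n := fun i => w i.castSucc
def restrLe {n N : ℕ} (h : n ≤ N) (w : Vertex m N) : Vertex m n :=
  fun i => w ⟨i, lt_of_lt_of_le i.2 h⟩
def AutT (m : ℕ → ℕ) : Subgroup (∀ n, Equiv.Perm (Vertex m n)) where
  carrier := {g | ∀ (n : ℕ) (w : Vertex m (n + 1)), restr (g (n + 1) w) = g n (restr w)}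
  one_mem' := by intro n w; rfl
  mul_mem' := by
    intro a b ha hb n w
    show restr ((a (n+1)) ((b (n+1)) w)) = (a n) ((b n) (restr w))
    rw [ha, hb]
  inv_mem' := by
    intro a ha n w
    show restr ((a (n+1))⁻¹ w) = (a n)⁻¹ (restr w)
    apply (a n).injective
    have h1 := ha n ((a (n+1))⁻¹ w)
    simp only [← Equiv.Perm.mul_apply, mul_inv_cancel, Equiv.Perm.one_apply] at h1
    rw [← h1, ← Equiv.Perm.mul_apply, mul_inv_cancel, Equiv.Perm.one_apply]
def app {n : ℕ} (g : AutT m) (v : Vertex m n) : Vertex m n := g.val n v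
theorem restrLe_app (g : AutT m) : ∀ {N n : ℕ} (h : n ≤ N) (w : Vertex m N),
    restrLe h (g.val N w) = g.val n (restrLe h w) := by
  intro N
  induction N with
  | zero =>
    intro n h w
    have hn : n = 0 := Nat.le_zero.mp h
    subst hn; rfl
  | succ N ih =>
    intro n h w
    rcases Nat.eq_or_lt_of_le h with rfl | h'
    · rfl
    · have hN : n ≤ N := Nat.lt_succ_iff.mp h'
      calc restrLe h (g.val (N+1) w) = restrLe hN (restr (g.val (N+1) w)) := rfl
        _ = restrLe hN (g.val N (restr w)) := by rw [g.prop N w]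
        _ = g.val n (restrLe hN (restr w)) := ih hN _
        _ = g.val n (restrLe h w) := rfl
abbrev shift (m : ℕ → ℕ) (n : ℕ) : ℕ → ℕ := fun i => m (n + i)
def vappend {n k : ℕ} (v : Vertex (shift m n) k) (w : Vertex m n) : Vertex m (n + k) :=
  fun i => if h : (i : ℕ) < n then w ⟨i, h⟩
    else Fin.cast (congrArg m (by omega : n + ((i : ℕ) - n) = (i : ℕ)))
      (v ⟨(i : ℕ) - n, by omega⟩)
def topPart {n k : ℕ} (u : Vertex m (n + k)) : Vertex (shift m n) k :=
  fun i => u ⟨n + i, by omega⟩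

theorem topPart_vappend {n k : ℕ} (v : Vertex (shift m n) k) (w : Vertex m n) :
    topPart (vappend v w) = v := by
  funext i
  simp only [topPart, vappend, Fin.val_mk]
  rw [dif_neg (by omega)]
  apply Fin.ext
  simp only [Fin.coe_cast]
  exact congrArg (fun t : Fin k => (v t).1) (Fin.ext (by simp))

theorem restrLe_vappend {n k : ℕ} (v : Vertex (shift m n) k) (w : Vertex m n) :
    restrLe (Nat.le_add_right n k) (vappend v w) = w := by
  funext i
  simp only [restrLe, vappend, Fin.val_mk]
  rw [dif_pos i.2]

theorem vappend_topPart {n k : ℕ} (u : Vertex m (n + k)) :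
    vappend (topPart u) (restrLe (Nat.le_add_right n k) u) = u := by
  funext i
  by_cases h : (i : ℕ) < n
  · simp only [vappend, restrLe]
    rw [dif_pos h]
  · simp only [vappend, topPart, Fin.val_mk]
    rw [dif_neg h]
    apply Fin.ext
    simp only [Fin.coe_cast]
    exact congrArg (fun t : Fin (n+k) => (u t).1) (Fin.ext (by simp; omega))

theorem restr_vappend {n k : ℕ} (v : Vertex (shift m n) (k + 1)) (w : Vertex m n) :
    restr (n := n + k) (vappend (n := n) (k := k + 1) v w) = vappend (restr v) w := by
  funext i
  by_cases h : (i : ℕ) < n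
  · show vappend v w (Fin.castSucc i) = vappend (restr v) w i
    simp only [vappend]
    rw [dif_pos (show ((Fin.castSucc i : Fin (n+k+1)) : ℕ) < n from h), dif_pos h]
    rfl
  · show vappend v w (Fin.castSucc i) = vappend (restr v) w i
    simp only [vappend]
    rw [dif_neg (show ¬ ((Fin.castSucc i : Fin (n+k+1)) : ℕ) < n from h), dif_neg h]
    rfl

def secFun (g : AutT m) {n : ℕ} (w : Vertex m n) (k : ℕ)
    (v : Vertex (shift m n) k) : Vertex (shift m n) k :=
  topPart (g.val (n + k) (vappend v w))

theorem secFun_spec (g : AutT m) {n : ℕ} (w : Vertex m n) (k : ℕ)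
    (v : Vertex (shift m n) k) :
    g.val (n + k) (vappend v w) = vappend (secFun g w k v) (g.val n w) := by
  have h1 : restrLe (Nat.le_add_right n k) (g.val (n + k) (vappend v w)) = g.val n w := by
    rw [restrLe_app, restrLe_vappend]
  conv_lhs => rw [← vappend_topPart (g.val (n + k) (vappend v w))]
  rw [h1]
  rfl

theorem coe_inv_app (g : AutT m) (N : ℕ) (u : Vertex m N) :
    (g⁻¹ : AutT m).val N ((g : AutT m).val N u) = u := by
  have h : ((g⁻¹ : AutT m) : ∀ n, Equiv.Perm (Vertex m n)) = (↑g)⁻¹ := rfl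
  rw [h]
  exact Equiv.symm_apply_apply _ _

theorem secFun_left_inv (g : AutT m) {n : ℕ} (w : Vertex m n) (k : ℕ)
    (v : Vertex (shift m n) k) :
    secFun g⁻¹ (g.val n w) k (secFun g w k v) = v := by
  show topPart ((g⁻¹ : AutT m).val (n+k) (vappend (secFun g w k v) (g.val n w))) = v
  rw [← secFun_spec g w k v, coe_inv_app, topPart_vappend]

def sectionEquiv (g : AutT m) {n : ℕ} (w : Vertex m n) (k : ℕ) :
    Equiv.Perm (Vertex (shift m n) k) where
  toFun := secFun g w k
  invFun := secFun g⁻¹ (g.val n w) k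
  left_inv v := secFun_left_inv g w k v
  right_inv v := by
    have h2 : (g⁻¹ : AutT m)⁻¹ = g := inv_inv g
    have h3 : (g⁻¹ : AutT m).val n (g.val n w) = w := coe_inv_app g n w
    calc secFun g w k (secFun g⁻¹ (g.val n w) k v)
        = secFun (g⁻¹)⁻¹ ((g⁻¹ : AutT m).val n (g.val n w)) k
            (secFun g⁻¹ (g.val n w) k v) := by rw [h2, h3]
      _ = v := secFun_left_inv g⁻¹ (g.val n w) k v

theorem secFun_restr (g : AutT m) {n : ℕ} (w : Vertex m n) (k : ℕ)
    (v : Vertex (shift m n) (k + 1)) :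
    restr (secFun g w (k + 1) v) = secFun g w k (restr v) := by
  show restr (topPart (g.val (n + (k+1)) (vappend v w)))
      = topPart (g.val (n + k) (vappend (restr v) w))
  rw [← restr_vappend (n := n) (k := k) v w, ← g.prop (n + k) (vappend (n := n) (k := k + 1) v w)]
  rfl

/-- The section `g|_w` of a tree automorphism `g` at the level-`n` vertex `w`:
the unique automorphism of the shifted tree satisfying `(vw)·g = (v·g|_w)(w·g)`. -/
def sectionAut (g : AutT m) {n : ℕ} (w : Vertex m n) : AutT (shift m n) :=
  ⟨fun k => sectionEquiv g w k, fun k v => secFun_restr g w k v⟩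


/-! ### Distinguished vertices and predicates -/

/-- The level-`n` vertex `0⋯0` on the `0`-ray. -/
def rayV (hm : ∀ i, 0 < m i) (n : ℕ) : Vertex m n := fun i => ⟨0, hm i⟩

/-- The level-`(n+1)` neighbour `x0⋯0` of the `0`-ray: its only (possibly) non-zero
letter is the leading one, equal to `x`. -/
def nbrV (hm : ∀ i, 0 < m i) {n : ℕ} (x : Fin (m n)) : Vertex m (n + 1) :=
  fun i => if h : (i : ℕ) = n then Fin.cast (congrArg m h).symm x else ⟨0, hm i⟩

/-- The level-`n` vertex obtained from `w0` by prepending zeros. -/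
def padZero (hm : ∀ i, 0 < m i) {n₀ : ℕ} (w0 : Vertex m n₀) (n : ℕ) : Vertex m n :=
  fun i => if h : (i : ℕ) < n₀ then w0 ⟨i, h⟩ else ⟨0, hm i⟩

/-- The level-`(n+1)` vertex `x0⋯0w0`: the word `w0` at the bottom, the letter `x`
in the leading position, and zeros in between. -/
def padLead (hm : ∀ i, 0 < m i) {n₀ : ℕ} (w0 : Vertex m n₀) {n : ℕ} (x : Fin (m n)) :
    Vertex m (n + 1) :=
  fun i => if h : (i : ℕ) < n₀ then w0 ⟨i, h⟩
    else if h2 : (i : ℕ) = n then Fin.cast (congrArg m h2).symm x else ⟨0, hm i⟩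

/-- `w` lies on the `0`-ray. -/
def OnRay {n : ℕ} (w : Vertex m n) : Prop := ∀ i, (w i : ℕ) = 0

/-- `w` is a neighbour of the `0`-ray: its leading letter is non-zero and all other
letters are zero. -/
def IsNbr {n : ℕ} (w : Vertex m n) : Prop :=
  ∃ hn : 0 < n, (w ⟨n - 1, by omega⟩ : ℕ) ≠ 0 ∧
    ∀ i : Fin n, (i : ℕ) < n - 1 → (w i : ℕ) = 0

/-- A *rooted* automorphism: it permutes the first level and all its sections at
vertices of level `≥ 1` are trivial (i.e. it is an element of `Sym(X_{m_1})`). -/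
def IsRooted (g : AutT m) : Prop :=
  ∀ (n : ℕ) (w : Vertex m n), 0 < n → sectionAut g w = 1

/-- A *directed automorphism along the `0`-ray* (an element of `H_m̄`): it fixes the
`0`-ray, its sections away from the ray and its neighbours are trivial, and its
sections at neighbours of the ray are rooted. -/
def IsDirectedAut (g : AutT m) : Prop :=
  (∀ (n : ℕ) (w : Vertex m n), OnRay w → g.val n w = w) ∧
  (∀ (n : ℕ) (w : Vertex m n), ¬ OnRay w → ¬ IsNbr w → sectionAut g w = 1) ∧
  (∀ (n : ℕ) (w : Vertex m n), IsNbr w → IsRooted (sectionAut g w))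

/-- The group `𝒜_n` of `n`-th level sections of `𝒜` along the `0`-ray. -/
def Asub (hm : ∀ i, 0 < m i) (A : Subgroup (AutT m)) (n : ℕ) :
    Subgroup (AutT (shift m n)) :=
  Subgroup.closure {h | ∃ a ∈ A, h = sectionAut a (rayV hm n)}

/-- The group `ℬ_n` generated by the `n`-th level sections of `𝒜` at the neighbours
of the `0`-ray (trivial for `n = 0`, where there are no neighbours). -/
def Bsub (hm : ∀ i, 0 < m i) (A : Subgroup (AutT m)) : (n : ℕ) → Subgroup (AutT (shift m n))
  | 0 => ⊥
  | (k + 1) =>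
    Subgroup.closure {h | ∃ a ∈ A, ∃ x : Fin (m k), (x : ℕ) ≠ 0 ∧ h = sectionAut a (nbrV hm x)}

/-- The condition, for a word `w`, that position `i` is the position situated just
above the lowest non-zero letter of `w`. -/
def SpineCond {n : ℕ} (w : Vertex m n) (i : Fin n) : Prop :=
  ∃ p : Fin n, (w p : ℕ) ≠ 0 ∧ (∀ q : Fin n, (q : ℕ) < (p : ℕ) → (w q : ℕ) = 0) ∧
    (i : ℕ) = (p : ℕ) + 1

open Classical in
/-- The action of the spine-permutation automorphism `h_σ̄`: the letter just above
the lowest non-zero letter is permuted (by the permutation attached to its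
alphabet size); all-zero words are fixed. -/
noncomputable def spineFun (σ : ∀ j : ℕ, Equiv.Perm (Fin j)) {n : ℕ} (w : Vertex m n) :
    Vertex m n :=
  fun i => if SpineCond w i then (σ (m i)) (w i) else w i

/-! ### Probability measures, entropy, random walks -/

/-- `μ` is a probability measure (given by its density on a discrete group/set). -/
def IsProbMeas {G : Type*} (μ : G → ℝ) : Prop := (∀ g, 0 ≤ μ g) ∧ HasSum μ 1

/-- `μ` is symmetric. -/
def IsSymmMeas {G : Type*} [Group G] (μ : G → ℝ) : Prop := ∀ g, μ g⁻¹ = μ g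

/-- Convolution of two measures on a discrete group. -/
noncomputable def conv {G : Type*} [Group G] (μ ν : G → ℝ) : G → ℝ :=
  fun g => ∑' h, μ h * ν (h⁻¹ * g)

open Classical in
/-- `k`-fold convolution power `μ^{*k}` (with `μ^{*0} = δ_e`). -/
noncomputable def convPow {G : Type*} [Group G] (μ : G → ℝ) : ℕ → G → ℝ
  | 0 => fun g => if g = 1 then 1 else 0
  | (k + 1) => conv μ (convPow μ k)

/-- Shannon entropy `H(p) = -∑ p log p` of a discrete measure. -/
noncomputable def entropy {X : Type*} (p : X → ℝ) : ℝ := ∑' x, Real.negMulLog (p x)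

/-- Shannon entropy, valued in `ℝ≥0∞`. -/
noncomputable def entropyE {X : Type*} (p : X → ℝ) : ℝ≥0∞ :=
  ∑' x, ENNReal.ofReal (Real.negMulLog (p x))

/-- The Liouville property: every bounded `μ`-harmonic function is constant on the
subgroup generated by the support of `μ`. -/
def IsLiouville {G : Type*} [Group G] (μ : G → ℝ) : Prop :=
  ∀ f : G → ℝ, (∃ C, ∀ g, |f g| ≤ C) → (∀ g, f g = ∑' h, f (g * h) * μ h) →
    ∀ g ∈ Subgroup.closure (Function.support μ),
      ∀ h ∈ Subgroup.closure (Function.support μ), f g = f h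

/-- The position of the right random walk after `t` steps, as a function of the
increments `s 0, s 1, …` (the group element `s_t ⋯ s_2 s_1`; with this convention,
applying it to a point `x` performs the corresponding right walk on any space the
group acts on from the right). -/
def rwProd {G : Type*} [Group G] {k : ℕ} (s : Fin k → G) (t : ℕ) : G :=
  (((List.ofFn s).take t).reverse).prod

open Classical in
/-- The law of the pair (section/position) of the right `μ`-random walk observed at
the `j`-th visit of the trajectory `v·g_1, v·g_2, …` to the set `W`:
`visitLaw μ act v W sec j (h, u) = P(g at j-th visit has sec = h and position = u)`.
Here `act` is the (right) action used for the trajectory and `sec` the observable. -/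
noncomputable def visitLaw {G X H : Type*} [Group G] (μ : G → ℝ)
    (act : G → X → X) (v : X) (W : Set X) (sec : G → H) (j : ℕ) : H × X → ℝ :=
  fun p =>
    ∑' k : ℕ, ∑' s : Fin k → G,
      (∏ i, μ (s i)) *
        (if ((Finset.range k).filter fun t => act (rwProd s (t + 1)) v ∈ W).card = j
            ∧ act (rwProd s k) v ∈ W
            ∧ (sec (rwProd s k), act (rwProd s k) v) = p
          then 1 else 0)

/-! ### Electrical networks -/

/-- The Dirichlet energy of `f` with respect to the symmetric conductances `c`. -/
noncomputable def dirichlet {V : Type*} [Fintype V] (c : V → V → ℝ) (f : V → ℝ) : ℝ :=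
  (1 / 2) * ∑ u : V, ∑ v : V, c u v * (f u - f v) ^ 2

/-- Effective conductance between the disjoint vertex sets `A` and `B`. -/
noncomputable def effCond {V : Type*} [Fintype V] (c : V → V → ℝ) (A B : Set V) : ℝ :=
  sInf (dirichlet c '' {f | (∀ a ∈ A, f a = 1) ∧ (∀ b ∈ B, f b = 0)})

/-- Effective resistance between `A` and `B`, valued in `ℝ≥0∞` (infinite when the
effective conductance vanishes). -/
noncomputable def effResE {V : Type*} [Fintype V] (c : V → V → ℝ) (A B : Set V) : ℝ≥0∞ :=
  (ENNReal.ofReal (effCond c A B))⁻¹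

open Classical in
/-- Conductances of the Schreier graph of the action on level `n` with (multi-)edges
given by a generating set: `c u v = #{s ∈ gens : u·s = v}` for `u ≠ v`. -/
noncomputable def schreierCond (gens : Set (AutT m)) (n : ℕ) :
    Vertex m n → Vertex m n → ℝ :=
  fun u v => if u = v then 0 else (Set.ncard {s | s ∈ gens ∧ app s u = v} : ℝ)

open Classical in
/-- Conductances of the Schreier graph of the action on level `n`, with weights
`κ s` on the edge corresponding to the generator `s`. -/
noncomputable def schreierCondWt (S : Finset (AutT m)) (κ : AutT m → ℝ) (n : ℕ) :
    Vertex m n → Vertex m n → ℝ :=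
  fun u v => if u = v then 0 else ∑ s ∈ S.filter (fun s => app s u = v), κ s

/-- The set `𝔸_n` of level-`n` vertices where some generator `s ∈ S` has a
non-trivial section lying in `𝒜_n`. -/
def ASet (hm : ∀ i, 0 < m i) (A : Subgroup (AutT m)) (S : Finset (AutT m)) (n : ℕ) :
    Set (Vertex m n) :=
  {w | ∃ s ∈ S, sectionAut s w ∈ Asub hm A n ∧ sectionAut s w ≠ 1}

/-- The set `𝔹_n` of level-`n` vertices where some generator `s ∈ S` has a
non-trivial section lying in `ℬ_n`. -/
def BSet (hm : ∀ i, 0 < m i) (A : Subgroup (AutT m)) (S : Finset (AutT m)) (n : ℕ) :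
    Set (Vertex m n) :=
  {w | ∃ s ∈ S, sectionAut s w ∈ Bsub hm A n ∧ sectionAut s w ≠ 1}

/-- The orbit of a level-`n` vertex under a subgroup `G ≤ Aut(T_m)`. -/
def orbitOf (G : Subgroup (AutT m)) {n : ℕ} (v : Vertex m n) : Set (Vertex m n) :=
  {u | ∃ g : AutT m, g ∈ G ∧ app g v = u}

/-! ### Regular trees and automata -/

/-- The constant valency sequence (regular rooted tree `T_mm`). -/
abbrev constSeq (mm : ℕ) : ℕ → ℕ := fun _ => mm


/-- An invertible automaton over the alphabet of a regular tree: a finite set of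
automorphisms closed under taking sections at one-letter words. -/
def IsAutomaton {mm : ℕ} (A : Finset (AutT (constSeq mm))) : Prop :=
  ∀ a ∈ A, ∀ x : Vertex (constSeq mm) 1, sectionAut a x ∈ A

/-- Bounded activity: for every state `a`, the number of level-`n` words with
non-trivial section is bounded uniformly in `n`. -/
def IsBoundedActivity {mm : ℕ} (A : Finset (AutT (constSeq mm))) : Prop :=
  ∀ a ∈ A, ∃ B : ℕ, ∀ n : ℕ,
    Set.ncard {w : Vertex (constSeq mm) n | sectionAut a w ≠ 1} ≤ B

/-- Word length with respect to a finite symmetric generating set. -/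
noncomputable def wordLen {G : Type*} [Group G] (S : Set G) (g : G) : ℕ :=
  sInf {k | ∃ l : List G, l.length = k ∧ (∀ s ∈ l, s ∈ S) ∧ l.prod = g}

/-! ### Auxiliary lemmas for Statement 5 -/

theorem letter_congr {N : ℕ} (u : Vertex m N) {i j : Fin N} (h : (i : ℕ) = (j : ℕ)) :
    (u i : ℕ) = (u j : ℕ) :=
  congrArg (fun t : Fin N => ((u t : ℕ))) (Fin.ext h)

theorem sectionAut_one {n : ℕ} (w : Vertex m n) : sectionAut (1 : AutT m) w = 1 := by
  apply Subtype.ext; funext k; apply Equiv.ext; intro v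
  show secFun 1 w k v = v
  exact topPart_vappend v w

theorem sectionAut_mul (g h : AutT m) {n : ℕ} (w : Vertex m n) :
    sectionAut (g * h) w = sectionAut g (h.val n w) * sectionAut h w := by
  apply Subtype.ext; funext k; apply Equiv.ext; intro v
  show secFun (g * h) w k v = secFun g (h.val n w) k (secFun h w k v)
  show topPart (g.val (n+k) (h.val (n+k) (vappend v w))) = _
  rw [secFun_spec h w k v]
  rfl

theorem app_low (g : AutT m) {n k : ℕ} (w : Vertex m (n + k)) (i : Fin (n + k))
    (hi : (i : ℕ) < n) :
    (g.val (n + k) w i : ℕ) = (g.val n (restrLe (Nat.le_add_right n k) w) ⟨i, hi⟩ : ℕ) := by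
  have h2 := congrFun (restrLe_app g (Nat.le_add_right n k) w) ⟨(i : ℕ), hi⟩
  exact congrArg Fin.val h2

theorem app_high (g : AutT m) {n k : ℕ} (w : Vertex m (n + k)) (i : Fin (n + k))
    (hi : n ≤ (i : ℕ)) :
    (g.val (n + k) w i : ℕ) =
      ((sectionAut g (restrLe (Nat.le_add_right n k) w)).val k (topPart w)
        ⟨(i : ℕ) - n, by omega⟩ : ℕ) := by
  have h := secFun_spec g (restrLe (Nat.le_add_right n k) w) k (topPart w)
  rw [vappend_topPart] at h
  rw [h]
  show ((vappend (secFun g _ k (topPart w)) (g.val n _) : Vertex m (n+k)) i : ℕ) = _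
  simp only [vappend, dif_neg (not_lt.mpr hi), Fin.coe_cast]
  rfl

theorem onRay_eq (hm : ∀ i, 0 < m i) {N : ℕ} (u : Vertex m N) (h : OnRay u) :
    u = rayV hm N :=
  funext fun i => Fin.ext (h i)

theorem onRay_rayV (hm : ∀ i, 0 < m i) (N : ℕ) : OnRay (rayV hm N) := fun _ => rfl

theorem rooted_app {b : AutT m} (hb : IsRooted b) {N : ℕ} (u : Vertex m N) (i : Fin N)
    (hi : (i : ℕ) ≠ 0) : (b.val N u i : ℕ) = (u i : ℕ) := by
  obtain ⟨k, rfl⟩ : ∃ k, N = 1 + k := ⟨N - 1, by omega⟩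
  have h1 : sectionAut b (restrLe (Nat.le_add_right 1 k) u) = 1 := hb 1 _ one_pos
  rw [app_high b u i (by omega)]
  rw [h1]
  have : ((1 : AutT (shift m 1)).val k (topPart u) ⟨(i:ℕ) - 1, by omega⟩ : ℕ)
      = (topPart u ⟨(i:ℕ) - 1, by omega⟩ : ℕ) := rfl
  rw [this]
  exact letter_congr u (by simp [topPart]; omega)
theorem exists_min_nonzero {N : ℕ} (u : Vertex m N) (h : ¬ OnRay u) :
    ∃ p : Fin N, (u p : ℕ) ≠ 0 ∧ ∀ q : Fin N, (q : ℕ) < (p : ℕ) → (u q : ℕ) = 0 := by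
  classical
  have hex : ∃ j : ℕ, ∃ hj : j < N, (u ⟨j, hj⟩ : ℕ) ≠ 0 := by
    simp only [OnRay, not_forall] at h
    obtain ⟨i, hi⟩ := h
    exact ⟨i, i.2, by simpa using hi⟩
  obtain ⟨hj, hne⟩ := Nat.find_spec hex
  refine ⟨⟨Nat.find hex, hj⟩, hne, ?_⟩
  intro q hq
  by_contra hq0
  exact Nat.find_min hex hq ⟨q.2, by simpa using hq0⟩

theorem isNbr_elim {n : ℕ} (u : Vertex m (n + 1)) (h : IsNbr u) :
    ((u ⟨n, by omega⟩ : ℕ) ≠ 0) ∧ ∀ i : Fin (n + 1), (i : ℕ) < n → (u i : ℕ) = 0 := by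
  obtain ⟨hn, h1, h2⟩ := h
  exact ⟨h1, fun i hi => h2 i hi⟩

theorem isNbr_intro {n : ℕ} (u : Vertex m (n + 1)) (h1 : (u ⟨n, by omega⟩ : ℕ) ≠ 0)
    (h2 : ∀ i : Fin (n + 1), (i : ℕ) < n → (u i : ℕ) = 0) : IsNbr u :=
  ⟨Nat.succ_pos n, h1, fun i hi => h2 i hi⟩

theorem eq_nbrV (hm : ∀ i, 0 < m i) {n : ℕ} (u : Vertex m (n + 1))
    (h2 : ∀ i : Fin (n + 1), (i : ℕ) < n → (u i : ℕ) = 0) :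
    u = nbrV hm (u ⟨n, Nat.lt_succ_self n⟩) := by
  funext i
  by_cases hc : (i : ℕ) = n
  · simp only [nbrV]
    rw [dif_pos hc]
    apply Fin.ext
    rw [Fin.coe_cast]
    exact letter_congr u hc
  · simp only [nbrV]
    rw [dif_neg hc]
    apply Fin.ext
    exact h2 i (by omega)

theorem dir_app {a : AutT m} (hm : ∀ i, 0 < m i) (ha : IsDirectedAut a) {N : ℕ}
    (u : Vertex m N) (p : ℕ) (hpN : p < N) (hp : (u ⟨p, hpN⟩ : ℕ) ≠ 0)
    (hmin : ∀ q (hq : q < p), (u ⟨q, by omega⟩ : ℕ) = 0) :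
    ((a.val N u ⟨p, hpN⟩ : ℕ) ≠ 0) ∧
      ∀ i : Fin N, (i : ℕ) ≠ p → (i : ℕ) ≠ p + 1 → (a.val N u i : ℕ) = (u i : ℕ) := by
  obtain ⟨k, rfl⟩ : ∃ k, N = (p + 1) + k := ⟨N - (p + 1), by omega⟩
  set w₀ : Vertex m (p + 1) := restrLe (Nat.le_add_right (p + 1) k) u with hw₀
  -- low letters of u are zero
  have hw₀min : ∀ i : Fin (p + 1), (i : ℕ) < p → (w₀ i : ℕ) = 0 := fun i hi => hmin i hi
  have hw₀p : (w₀ ⟨p, Nat.lt_succ_self p⟩ : ℕ) ≠ 0 := hp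
  -- a fixes low letters of w₀
  have hray : OnRay (restrLe (Nat.le_succ p) w₀) := fun i => hmin i i.2
  have hfix : restrLe (Nat.le_succ p) (a.val (p + 1) w₀) = restrLe (Nat.le_succ p) w₀ := by
    rw [restrLe_app]
    exact ha.1 p _ hray
  have hlow : ∀ q (hq : q < p), (a.val (p + 1) w₀ ⟨q, by omega⟩ : ℕ) = 0 := by
    intro q hq
    have := congrFun hfix ⟨q, hq⟩
    have h2 : (a.val (p + 1) w₀ ⟨q, by omega⟩ : ℕ) = (w₀ ⟨q, by omega⟩ : ℕ) :=
      congrArg Fin.val this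
    rw [h2]
    exact hw₀min ⟨q, by omega⟩ hq
  -- top letter of a(w₀) is nonzero
  have htopne : (a.val (p + 1) w₀ ⟨p, Nat.lt_succ_self p⟩ : ℕ) ≠ 0 := by
    intro h0
    have hall : OnRay (a.val (p + 1) w₀) := by
      intro i
      by_cases hc : (i : ℕ) = p
      · rw [letter_congr (a.val (p + 1) w₀)
          (show (i : ℕ) = ((⟨p, Nat.lt_succ_self p⟩ : Fin (p + 1)) : ℕ) from hc)]
        exact h0
      · exact hlow i (by omega)
    have h4 : a.val (p + 1) w₀ = rayV hm (p + 1) := onRay_eq hm _ hall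
    have h5 : a.val (p + 1) (rayV hm (p + 1)) = rayV hm (p + 1) :=
      ha.1 (p + 1) _ (onRay_rayV hm (p + 1))
    have h6 : w₀ = rayV hm (p + 1) := (a.val (p + 1)).injective (h4.trans h5.symm)
    apply hw₀p
    rw [h6]
    rfl
  -- the section at w₀ is rooted
  have hnbr : IsNbr w₀ := isNbr_intro w₀ hw₀p hw₀min
  have hroot : IsRooted (sectionAut a w₀) := ha.2.2 (p + 1) w₀ hnbr
  constructor
  · have := app_low a u ⟨p, hpN⟩ (Nat.lt_succ_self p)
    rw [this]
    exact htopne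
  · intro i hi1 hi2
    by_cases hc : (i : ℕ) < p + 1
    · have hc' : (i : ℕ) < p := by omega
      rw [app_low a u i hc]
      have : (a.val (p+1) w₀ ⟨(i:ℕ), hc⟩ : ℕ) = 0 := hlow i hc'
      rw [this]
      exact (hmin i hc').symm
    · have hge : p + 1 ≤ (i : ℕ) := by omega
      rw [app_high a u i hge]
      have hne0 : ((⟨(i : ℕ) - (p+1), by omega⟩ : Fin k) : ℕ) ≠ 0 := by
        simp only []
        omega
      have := rooted_app hroot (topPart u) ⟨(i : ℕ) - (p + 1), by omega⟩ hne0
      rw [this]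
      exact letter_congr u (by simp [topPart]; omega)
/-- A generator is either a directed element of `A` or a rooted element of `B`. -/
def GoodGen (A B : Subgroup (AutT m)) (g : AutT m) : Prop :=
  (g ∈ A ∧ IsDirectedAut g) ∨ (g ∈ B ∧ IsRooted g)

def InvA (n t : ℕ) (u : Vertex m (n + 1)) : Prop :=
  (u ⟨n, by omega⟩ : ℕ) = 0 ∨
    ∃ p : Fin (n + 1), n - t ≤ (p : ℕ) ∧ (p : ℕ) < n ∧ (u p : ℕ) ≠ 0

def InvB (n t : ℕ) (u : Vertex m (n + 1)) : Prop :=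
  (u ⟨n, by omega⟩ : ℕ) ≠ 0 ∨
    ∃ p : Fin (n + 1), n - t ≤ (p : ℕ) ∧ (p : ℕ) < n ∧ (u p : ℕ) ≠ 0

def InvC (n q t : ℕ) (u : Vertex m (n + 1)) : Prop :=
  ∃ p : Fin (n + 1), q - t ≤ (p : ℕ) ∧ (p : ℕ) ≤ q ∧ (u p : ℕ) ≠ 0

theorem section_mem_Asub (hm : ∀ i, 0 < m i) {A : Subgroup (AutT m)} {a : AutT m}
    (haA : a ∈ A) (ha : IsDirectedAut a) {n : ℕ} (u : Vertex m (n + 1)) (h : ¬ IsNbr u) :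
    sectionAut a u ∈ Asub hm A (n + 1) := by
  by_cases hr : OnRay u
  · rw [onRay_eq hm u hr]
    exact Subgroup.subset_closure ⟨a, haA, rfl⟩
  · rw [ha.2.1 _ u hr h]
    exact one_mem _

theorem section_mem_Bsub (hm : ∀ i, 0 < m i) {A : Subgroup (AutT m)} {a : AutT m}
    (haA : a ∈ A) (ha : IsDirectedAut a) {n : ℕ} (u : Vertex m (n + 1)) (h : ¬ OnRay u) :
    sectionAut a u ∈ Bsub hm A (n + 1) := by
  by_cases hb : IsNbr u
  · obtain ⟨h1, h2⟩ := isNbr_elim u hb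
    have he := eq_nbrV hm u h2
    show sectionAut a u ∈ Subgroup.closure
      {h | ∃ a ∈ A, ∃ x : Fin (m n), (x : ℕ) ≠ 0 ∧ h = sectionAut a (nbrV hm x)}
    exact Subgroup.subset_closure ⟨a, haA, u ⟨n, Nat.lt_succ_self n⟩, h1, by rw [← he]⟩
  · rw [ha.2.1 _ u h hb]
    exact one_mem _

theorem stepA {A B : Subgroup (AutT m)} (hm : ∀ i, 0 < m i) {g : AutT m}
    (hg : GoodGen A B g) {n t : ℕ} (hn : t + 1 ≤ n) (u : Vertex m (n + 1))
    (hu : InvA n t u) : InvA n (t + 1) (g.val (n + 1) u) := by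
  rcases hg with ⟨-, ha⟩ | ⟨-, hb⟩
  · by_cases hr : OnRay u
    · rw [ha.1 _ u hr]
      rcases hu with h | ⟨p, h1, h2, h3⟩
      · exact Or.inl h
      · exact Or.inr ⟨p, by omega, h2, h3⟩
    · obtain ⟨p, hp, hmin⟩ := exists_min_nonzero u hr
      obtain ⟨hnew, hoff⟩ := dir_app hm ha u p p.2 hp (fun q hq => hmin ⟨q, by omega⟩ hq)
      rcases hu with htop | ⟨s, hs1, hs2, hs3⟩
      · have hpn : (p : ℕ) ≠ n := by
          intro h
          exact hp ((letter_congr u h).trans htop)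
        by_cases hc : (p : ℕ) + 1 = n
        · exact Or.inr ⟨p, by omega, by omega, hnew⟩
        · refine Or.inl ?_
          rw [hoff ⟨n, by omega⟩ (by simpa using (Ne.symm hpn)) (by simpa using (Ne.symm hc))]
          exact htop
      · have hps : (p : ℕ) ≤ (s : ℕ) := by
          by_contra hcon
          exact hs3 (hmin s (by omega))
        by_cases h1 : (s : ℕ) = (p : ℕ)
        · exact Or.inr ⟨p, by omega, by omega, hnew⟩
        · by_cases h2 : (s : ℕ) = (p : ℕ) + 1
          · exact Or.inr ⟨p, by omega, by omega, hnew⟩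
          · exact Or.inr ⟨s, by omega, hs2, by rw [hoff s h1 h2]; exact hs3⟩
  · rcases hu with htop | ⟨s, hs1, hs2, hs3⟩
    · refine Or.inl ?_
      rw [rooted_app hb u ⟨n, by omega⟩ (by simp; omega)]
      exact htop
    · exact Or.inr ⟨s, by omega, hs2, by rw [rooted_app hb u s (by omega)]; exact hs3⟩

theorem stepB {A B : Subgroup (AutT m)} (hm : ∀ i, 0 < m i) {g : AutT m}
    (hg : GoodGen A B g) {n t : ℕ} (hn : t + 1 ≤ n) (u : Vertex m (n + 1))
    (hu : InvB n t u) : InvB n (t + 1) (g.val (n + 1) u) := by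
  have hnr : ¬ OnRay u := by
    rcases hu with htop | ⟨s, _, _, hs3⟩
    · exact fun hr => htop (hr _)
    · exact fun hr => hs3 (hr _)
  rcases hg with ⟨-, ha⟩ | ⟨-, hb⟩
  · obtain ⟨p, hp, hmin⟩ := exists_min_nonzero u hnr
    obtain ⟨hnew, hoff⟩ := dir_app hm ha u p p.2 hp (fun q hq => hmin ⟨q, by omega⟩ hq)
    rcases hu with htop | ⟨s, hs1, hs2, hs3⟩
    · by_cases hpn : (p : ℕ) = n
      · refine Or.inl ?_
        have : (g.val (n+1) u ⟨n, by omega⟩ : ℕ) = (g.val (n+1) u p : ℕ) :=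
          letter_congr _ (by simp [hpn])
        rw [this]
        exact hnew
      · by_cases hc : (p : ℕ) + 1 = n
        · exact Or.inr ⟨p, by omega, by omega, hnew⟩
        · refine Or.inl ?_
          rw [hoff ⟨n, by omega⟩ (by simpa using (Ne.symm hpn)) (by simpa using (Ne.symm hc))]
          exact htop
    · have hps : (p : ℕ) ≤ (s : ℕ) := by
        by_contra hcon
        exact hs3 (hmin s (by omega))
      by_cases h1 : (s : ℕ) = (p : ℕ)
      · exact Or.inr ⟨p, by omega, by omega, hnew⟩
      · by_cases h2 : (s : ℕ) = (p : ℕ) + 1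
        · exact Or.inr ⟨p, by omega, by omega, hnew⟩
        · exact Or.inr ⟨s, by omega, hs2, by rw [hoff s h1 h2]; exact hs3⟩
  · rcases hu with htop | ⟨s, hs1, hs2, hs3⟩
    · refine Or.inl ?_
      rw [rooted_app hb u ⟨n, by omega⟩ (by simp; omega)]
      exact htop
    · exact Or.inr ⟨s, by omega, hs2, by rw [rooted_app hb u s (by omega)]; exact hs3⟩

theorem stepC {A B : Subgroup (AutT m)} (hm : ∀ i, 0 < m i) {g : AutT m}
    (hg : GoodGen A B g) {n q t : ℕ} (hq : t + 1 ≤ q) (u : Vertex m (n + 1))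
    (hu : InvC n q t u) : InvC n q (t + 1) (g.val (n + 1) u) := by
  obtain ⟨s, hs1, hs2, hs3⟩ := hu
  have hnr : ¬ OnRay u := fun hr => hs3 (hr _)
  rcases hg with ⟨-, ha⟩ | ⟨-, hb⟩
  · obtain ⟨p, hp, hmin⟩ := exists_min_nonzero u hnr
    obtain ⟨hnew, hoff⟩ := dir_app hm ha u p p.2 hp (fun q' hq' => hmin ⟨q', by omega⟩ hq')
    have hps : (p : ℕ) ≤ (s : ℕ) := by
      by_contra hcon
      exact hs3 (hmin s (by omega))
    by_cases h1 : (s : ℕ) = (p : ℕ)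
    · exact ⟨p, by omega, by omega, hnew⟩
    · by_cases h2 : (s : ℕ) = (p : ℕ) + 1
      · exact ⟨p, by omega, by omega, hnew⟩
      · exact ⟨s, by omega, hs2, by rw [hoff s h1 h2]; exact hs3⟩
  · exact ⟨s, by omega, hs2, by rw [rooted_app hb u s (by omega)]; exact hs3⟩
theorem notNbr_of_InvA {n t : ℕ} (u : Vertex m (n + 1)) (hu : InvA n t u) : ¬ IsNbr u := by
  intro hnbr
  obtain ⟨h1, h2⟩ := isNbr_elim u hnbr
  rcases hu with htop | ⟨p, _, hp2, hp3⟩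
  · exact h1 htop
  · exact hp3 (h2 p hp2)

theorem notRay_of_InvB {n t : ℕ} (u : Vertex m (n + 1)) (hu : InvB n t u) : ¬ OnRay u := by
  rcases hu with htop | ⟨p, _, _, hp3⟩
  · exact fun hr => htop (hr _)
  · exact fun hr => hp3 (hr _)

theorem secA {A B : Subgroup (AutT m)} (hm : ∀ i, 0 < m i) {g : AutT m}
    (hg : GoodGen A B g) {n t : ℕ} (u : Vertex m (n + 1)) (hu : InvA n t u) :
    sectionAut g u ∈ Asub hm A (n + 1) := by
  rcases hg with ⟨hgA, ha⟩ | ⟨-, hb⟩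
  · exact section_mem_Asub hm hgA ha u (notNbr_of_InvA u hu)
  · rw [hb (n + 1) u (Nat.succ_pos n)]
    exact one_mem _

theorem secB {A B : Subgroup (AutT m)} (hm : ∀ i, 0 < m i) {g : AutT m}
    (hg : GoodGen A B g) {n t : ℕ} (u : Vertex m (n + 1)) (hu : InvB n t u) :
    sectionAut g u ∈ Bsub hm A (n + 1) := by
  rcases hg with ⟨hgA, ha⟩ | ⟨-, hb⟩
  · exact section_mem_Bsub hm hgA ha u (notRay_of_InvB u hu)
  · rw [hb (n + 1) u (Nat.succ_pos n)]
    exact one_mem _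

theorem secC {A B : Subgroup (AutT m)} {g : AutT m}
    (hg : GoodGen A B g) {n q t : ℕ} (hqn : q < n) (u : Vertex m (n + 1))
    (hu : InvC n q t u) : sectionAut g u = 1 := by
  obtain ⟨p, _, hp2, hp3⟩ := hu
  rcases hg with ⟨-, ha⟩ | ⟨-, hb⟩
  · refine ha.2.1 (n + 1) u (fun hr => hp3 (hr _)) ?_
    intro hnbr
    obtain ⟨-, h2⟩ := isNbr_elim u hnbr
    exact hp3 (h2 p (by omega))
  · exact hb (n + 1) u (Nat.succ_pos n)

theorem propA {A B : Subgroup (AutT m)} (hm : ∀ i, 0 < m i) {n : ℕ}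
    (L : List (AutT m)) (hL : ∀ g ∈ L, GoodGen A B g) (hlen : L.length ≤ n)
    (w : Vertex m (n + 1)) (hw : InvA n 0 w) :
    sectionAut L.prod w ∈ Asub hm A (n + 1) ∧ InvA n L.length (L.prod.val (n + 1) w) := by
  induction L with
  | nil =>
    constructor
    · rw [List.prod_nil, sectionAut_one]
      exact one_mem _
    · exact hw
  | cons g L' ih =>
    have hlen' : L'.length ≤ n := by simp at hlen; omega
    obtain ⟨hmem, hinv⟩ := ih (fun g' hg' => hL g' (List.mem_cons_of_mem g hg')) hlen' 
    constructor
    · rw [List.prod_cons, sectionAut_mul]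
      exact mul_mem (secA hm (hL g (List.mem_cons_self)) _ hinv) hmem
    · have : ((g :: L').prod).val (n + 1) w = g.val (n + 1) (L'.prod.val (n + 1) w) := by
        rw [List.prod_cons]; rfl
      rw [this]
      exact stepA hm (hL g (List.mem_cons_self)) (by simp at hlen ⊢; omega) _ hinv

theorem propB {A B : Subgroup (AutT m)} (hm : ∀ i, 0 < m i) {n : ℕ}
    (L : List (AutT m)) (hL : ∀ g ∈ L, GoodGen A B g) (hlen : L.length ≤ n)
    (w : Vertex m (n + 1)) (hw : InvB n 0 w) :
    sectionAut L.prod w ∈ Bsub hm A (n + 1) ∧ InvB n L.length (L.prod.val (n + 1) w) := by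
  induction L with
  | nil =>
    constructor
    · rw [List.prod_nil, sectionAut_one]
      exact one_mem _
    · exact hw
  | cons g L' ih =>
    have hlen' : L'.length ≤ n := by simp at hlen; omega
    obtain ⟨hmem, hinv⟩ := ih (fun g' hg' => hL g' (List.mem_cons_of_mem g hg')) hlen'
    constructor
    · rw [List.prod_cons, sectionAut_mul]
      exact mul_mem (secB hm (hL g (List.mem_cons_self)) _ hinv) hmem
    · have : ((g :: L').prod).val (n + 1) w = g.val (n + 1) (L'.prod.val (n + 1) w) := by
        rw [List.prod_cons]; rfl
      rw [this]
      exact stepB hm (hL g (List.mem_cons_self)) (by simp at hlen ⊢; omega) _ hinv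

theorem propC {A B : Subgroup (AutT m)} (hm : ∀ i, 0 < m i) {n q : ℕ} (hqn : q < n)
    (L : List (AutT m)) (hL : ∀ g ∈ L, GoodGen A B g) (hlen : L.length ≤ q)
    (w : Vertex m (n + 1)) (hw : InvC n q 0 w) :
    sectionAut L.prod w = 1 ∧ InvC n q L.length (L.prod.val (n + 1) w) := by
  induction L with
  | nil =>
    constructor
    · rw [List.prod_nil, sectionAut_one]
    · exact hw
  | cons g L' ih =>
    have hlen' : L'.length ≤ q := by simp at hlen; omega
    obtain ⟨hmem, hinv⟩ := ih (fun g' hg' => hL g' (List.mem_cons_of_mem g hg')) hlen'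
    constructor
    · rw [List.prod_cons, sectionAut_mul, hmem, secC (hL g (List.mem_cons_self)) hqn _ hinv,
        one_mul]
    · have : ((g :: L').prod).val (n + 1) w = g.val (n + 1) (L'.prod.val (n + 1) w) := by
        rw [List.prod_cons]; rfl
      rw [this]
      exact stepC hm (hL g (List.mem_cons_self)) (by simp at hlen ⊢; omega) _ hinv
theorem padZero_val (hm : ∀ i, 0 < m i) {n₀ n : ℕ} (v : Vertex m n₀) (i : Fin n)
    (h : ¬ (i : ℕ) < n₀) : (padZero hm v n i : ℕ) = 0 := by
  simp only [padZero]; rw [dif_neg h]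

theorem padZero_val_lt (hm : ∀ i, 0 < m i) {n₀ n : ℕ} (v : Vertex m n₀) (i : Fin n)
    (h : (i : ℕ) < n₀) : (padZero hm v n i : ℕ) = (v ⟨i, h⟩ : ℕ) := by
  simp only [padZero]; rw [dif_pos h]

theorem padLead_val_lt (hm : ∀ i, 0 < m i) {n₀ n : ℕ} (v : Vertex m n₀) (x : Fin (m n))
    (i : Fin (n + 1)) (h : (i : ℕ) < n₀) : (padLead hm v x i : ℕ) = (v ⟨i, h⟩ : ℕ) := by
  simp only [padLead]; rw [dif_pos h]

theorem padLead_val_top (hm : ∀ i, 0 < m i) {n₀ n : ℕ} (v : Vertex m n₀) (x : Fin (m n))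
    (i : Fin (n + 1)) (h1 : ¬ (i : ℕ) < n₀) (h2 : (i : ℕ) = n) :
    (padLead hm v x i : ℕ) = (x : ℕ) := by
  simp only [padLead]; rw [dif_neg h1, dif_pos h2]; exact Fin.coe_cast _ _

theorem padLead_val_mid (hm : ∀ i, 0 < m i) {n₀ n : ℕ} (v : Vertex m n₀) (x : Fin (m n))
    (i : Fin (n + 1)) (h1 : ¬ (i : ℕ) < n₀) (h2 : ¬ (i : ℕ) = n) :
    (padLead hm v x i : ℕ) = 0 := by
  simp only [padLead]; rw [dif_neg h1, dif_neg h2]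

/-- For a finite set `S ⊆ M(𝒜,ℬ)` there are `n₀` and finitely many
words `w_1, …, w_k` of length `n₀` such that at every level `n+1 > n₀`, setting
`𝔸 = {0⋯0w_j}` and `𝔹 = {x0⋯0w_j : x ≠ 0}`, the sections of every `s ∈ S` lie in
`𝒜_{n+1}` on `𝔸`, in `ℬ_{n+1}` on `𝔹`, and are trivial elsewhere; moreover `𝔸` and
`𝔹` are disjoint. -/
theorem sections_of_generating_set
    (m : ℕ → ℕ) (hm : ∀ i, 0 < m i) (hm2 : ∀ i, 2 ≤ m i)
    (M : ℕ) (hbd : ∀ i, m i ≤ M)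
    (A B : Subgroup (AutT m))
    (hAfin : (A : Set (AutT m)).Finite) (hAdir : ∀ a ∈ A, IsDirectedAut a)
    (hBfin : (B : Set (AutT m)).Finite) (hBrooted : ∀ b ∈ B, IsRooted b)
    (S : Finset (AutT m)) (hS : (S : Set (AutT m)) ⊆ (A ⊔ B : Subgroup (AutT m))) :
    ∃ (n₀ kk : ℕ) (ws : Fin kk → Vertex m n₀),
      ∀ n : ℕ, n₀ < n + 1 →
        (∀ w : Vertex m (n + 1),
          ¬ ((∃ j, w = padZero hm (ws j) (n + 1)) ∧
             (∃ (j : Fin kk) (x : Fin (m n)), (x : ℕ) ≠ 0 ∧ w = padLead hm (ws j) x))) ∧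
        (∀ s ∈ S, ∀ w : Vertex m (n + 1),
          ((∃ j, w = padZero hm (ws j) (n + 1)) →
            sectionAut s w ∈ Asub hm A (n + 1)) ∧
          ((∃ (j : Fin kk) (x : Fin (m n)), (x : ℕ) ≠ 0 ∧ w = padLead hm (ws j) x) →
            sectionAut s w ∈ Bsub hm A (n + 1)) ∧
          ((¬ ∃ j, w = padZero hm (ws j) (n + 1)) →
            (¬ ∃ (j : Fin kk) (x : Fin (m n)), (x : ℕ) ≠ 0 ∧ w = padLead hm (ws j) x) →
            sectionAut s w = 1)) := by


  classical
  have hex : ∀ s ∈ S, ∃ L : List (AutT m), (∀ g ∈ L, GoodGen A B g) ∧ L.prod = s := by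
    intro s hs
    have h1 : s ∈ Subgroup.closure ((A : Set (AutT m)) ∪ B) := by
      rw [Subgroup.closure_union, Subgroup.closure_eq, Subgroup.closure_eq]
      exact hS hs
    have h2 : s ∈ Submonoid.closure (((A : Set (AutT m)) ∪ B) ∪ ((A : Set (AutT m)) ∪ B)⁻¹) := by
      rw [← Subgroup.closure_toSubmonoid]
      exact h1
    obtain ⟨L, hL1, hL2⟩ := Submonoid.exists_list_of_mem_closure h2
    refine ⟨L, ?_, hL2⟩
    intro g hg
    rcases hL1 g hg with (h | h) | h
    · exact Or.inl ⟨h, hAdir g h⟩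
    · exact Or.inr ⟨h, hBrooted g h⟩
    · rw [Set.mem_inv] at h
      rcases h with h | h
      · simp only [SetLike.mem_coe] at h
        exact Or.inl ⟨A.inv_mem_iff.mp h, hAdir g (A.inv_mem_iff.mp h)⟩
      · simp only [SetLike.mem_coe] at h
        exact Or.inr ⟨B.inv_mem_iff.mp h, hBrooted g (B.inv_mem_iff.mp h)⟩
  choose L hL1 hL2 using hex
  set L₀ := S.attach.sup (fun s => (L s.1 s.2).length) with hL₀
  have hlen : ∀ s (hs : s ∈ S), (L s hs).length ≤ L₀ := fun s hs =>
    Finset.le_sup (f := fun s : {x // x ∈ S} => (L s.1 s.2).length) (Finset.mem_attach S ⟨s, hs⟩)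
  refine ⟨L₀ + 1, Fintype.card (Vertex m (L₀ + 1)),
    fun j => (Fintype.equivFin (Vertex m (L₀ + 1))).symm j, ?_⟩
  intro n hn
  have hn' : L₀ + 1 ≤ n := by omega
  constructor
  · rintro w ⟨⟨j, hj⟩, ⟨j', x, hx, hx'⟩⟩
    have e1 : (w ⟨n, by omega⟩ : ℕ) = 0 := by
      rw [hj]
      exact padZero_val hm _ _ (by simp; omega)
    have e2 : (w ⟨n, by omega⟩ : ℕ) = (x : ℕ) := by
      rw [hx']
      exact padLead_val_top hm _ _ _ (by simp; omega) (by simp)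
    omega
  · intro s hs w
    refine ⟨?_, ?_, ?_⟩
    · rintro ⟨j, hj⟩
      have hw : InvA n 0 w := by
        refine Or.inl ?_
        rw [hj]
        exact padZero_val hm _ _ (by simp; omega)
      have := (propA hm (L s hs) (hL1 s hs) (by have := hlen s hs; omega) w hw).1
      rwa [hL2 s hs] at this
    · rintro ⟨j, x, hx, hw⟩
      have hw' : InvB n 0 w := by
        refine Or.inl ?_
        rw [hw]
        rw [padLead_val_top hm _ _ _ (by simp; omega) (by simp)]
        exact hx
      have := (propB hm (L s hs) (hL1 s hs) (by have := hlen s hs; omega) w hw').1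
      rwa [hL2 s hs] at this
    · intro hnA hnB
      by_cases hex2 : ∃ i : Fin (n + 1), L₀ + 1 ≤ (i : ℕ) ∧ (i : ℕ) < n ∧ (w i : ℕ) ≠ 0
      · obtain ⟨i, hi1, hi2, hi3⟩ := hex2
        have hw : InvC n (i : ℕ) 0 w := ⟨i, by omega, le_refl _, hi3⟩
        have := (propC hm hi2 (L s hs) (hL1 s hs) (by have := hlen s hs; omega) w hw).1
        rwa [hL2 s hs] at this
      · push_neg at hex2
        set w0 : Vertex m (L₀ + 1) := restrLe (show L₀ + 1 ≤ n + 1 by omega) w with hw0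
        obtain ⟨j, hj⟩ : ∃ j, (Fintype.equivFin (Vertex m (L₀ + 1))).symm j = w0 :=
          ⟨Fintype.equivFin (Vertex m (L₀ + 1)) w0, Equiv.symm_apply_apply _ _⟩
        by_cases htop : (w ⟨n, by omega⟩ : ℕ) = 0
        · refine absurd ⟨j, ?_⟩ hnA
          show w = padZero hm ((Fintype.equivFin (Vertex m (L₀ + 1))).symm j) (n + 1)
          rw [hj]
          funext i
          apply Fin.ext
          by_cases h : (i : ℕ) < L₀ + 1
          · rw [padZero_val_lt hm _ _ h]
            rfl
          · rw [padZero_val hm _ _ h]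
            by_cases h2 : (i : ℕ) = n
            · rw [letter_congr w (show (i : ℕ) = ((⟨n, by omega⟩ : Fin (n + 1)) : ℕ) from h2)]
              exact htop
            · exact hex2 i (by omega) (by omega)
        · refine absurd ⟨j, w ⟨n, by omega⟩, htop, ?_⟩ hnB
          show w = padLead hm ((Fintype.equivFin (Vertex m (L₀ + 1))).symm j) (w ⟨n, by omega⟩)
          rw [hj]
          funext i
          apply Fin.ext
          by_cases h : (i : ℕ) < L₀ + 1
          · rw [padLead_val_lt hm _ _ _ h]
            rfl
          · by_cases h2 : (i : ℕ) = n
            · rw [padLead_val_top hm _ _ _ h h2]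
              exact letter_congr w (show (i : ℕ) = ((⟨n, by omega⟩ : Fin (n + 1)) : ℕ) from h2)
            · rw [padLead_val_mid hm _ _ _ h h2]
              exact hex2 i (by omega) (by omega)

end Paper
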